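/- In the network PD, if u ∈ ∩_{j=1}^k Λ^j(δ) (i.e., -δ ≤ μ^j(u) ≤ 0 for j = 1,...,k, k < N), then 0 ≤ ∑_{i=k+1}^N μ^i(u) ≤ kδ, and (∑_{i=k+1}^N π_i)·DD ≤ ∑_{i=k+1}^N π_i·ū_i ≤ (∑_{i=k+1}^N π_i)·CC + kδ/2, where ū_i = ∑_j K_{ij}u_{ij}. -/

import Mathlib

open Finset

/-- In the network PD: if `-δ ≤ μ^j(u) ≤ 0` for `j = 1,…,k` (`k < N`), then
`0 ≤ ∑_{i>k} μ^i(u) ≤ kδ` and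
`(∑_{i>k} π_i)·DD ≤ ∑_{i>k} π_i·ū_i ≤ (∑_{i>k} π_i)·CC + kδ/2`. -/
theorem network_group_bounds (N : ℕ) (CC CD DC DD : ℝ)
    (hpay : CD < DD ∧ DD < CC ∧ CC < DC)
    (K : Fin N → Fin N → ℝ) (hKnonneg : ∀ i j, 0 ≤ K i j) (hKrow : ∀ i, ∑ j, K i j = 1)
    (π : Fin N → ℝ) (hπpos : ∀ i, 0 < π i)
    (ω : Fin N → Fin N → ℝ) (hω : ∀ i j, ω i j = π i * K i j)
    (hsums : ∀ i, (∑ j, ω i j = π i) ∧ (∑ j, ω j i = π i))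
    (hPareto : ∀ i j, 0 < ω i j →
      (ω i j + ω j i) * DD < ω i j * CD + ω j i * DC ∧
      ω i j * CD + ω j i * DC < (ω i j + ω j i) * CC)
    (U : (Fin N → Bool) → Fin N → Fin N → ℝ)
    (hU : ∀ s i j, U s i j = if s i then (if s j then CC else CD)
                             else (if s j then DC else DD))
    (δ : ℝ) (hδ : 0 ≤ δ)
    (μ : Fin N → (Fin N → Fin N → ℝ) → ℝ)
    (hμ : ∀ i u, μ i u = ∑ j, (ω i j * u i j - ω j i * u j i))
    (k : ℕ) (hk : k < N)
    (u : Fin N → Fin N → ℝ) (hu : u ∈ convexHull ℝ {x | ∃ s, x = U s})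
    (hΛ : ∀ j : Fin N, (j : ℕ) < k → -δ ≤ μ j u ∧ μ j u ≤ 0) :
    (0 ≤ ∑ i ∈ univ.filter (fun i : Fin N => k ≤ (i : ℕ)), μ i u ∧
      ∑ i ∈ univ.filter (fun i : Fin N => k ≤ (i : ℕ)), μ i u ≤ k * δ) ∧
    ((∑ i ∈ univ.filter (fun i : Fin N => k ≤ (i : ℕ)), π i) * DD ≤
        ∑ i ∈ univ.filter (fun i : Fin N => k ≤ (i : ℕ)), π i * (∑ j, K i j * u i j) ∧
      ∑ i ∈ univ.filter (fun i : Fin N => k ≤ (i : ℕ)), π i * (∑ j, K i j * u i j) ≤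
        (∑ i ∈ univ.filter (fun i : Fin N => k ≤ (i : ℕ)), π i) * CC + k * δ / 2) := by
  classical
  obtain ⟨h1, h2, h3⟩ := hpay
  have hωnonneg : ∀ i j, 0 ≤ ω i j := fun i j => by
    rw [hω]; exact mul_nonneg (hπpos i).le (hKnonneg i j)
  have hωzero : ∀ i j, ω i j = 0 → ω j i = 0 := by
    intro i j hij
    by_contra h
    have hpos : 0 < ω j i := lt_of_le_of_ne (hωnonneg j i) (Ne.symm h)
    have hP := (hPareto j i hpos).1
    rw [hij] at hP
    nlinarith
  -- vertex bounds
  have hvert : ∀ (s : Fin N → Bool) (i j : Fin N),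
      (ω i j + ω j i) * DD ≤ ω i j * U s i j + ω j i * U s j i ∧
      ω i j * U s i j + ω j i * U s j i ≤ (ω i j + ω j i) * CC := by
    intro s i j
    rw [hU, hU]
    rcases eq_or_lt_of_le (hωnonneg i j) with hij | hij
    · have hji := hωzero i j hij.symm
      simp [← hij, hji]
    rcases eq_or_lt_of_le (hωnonneg j i) with hji | hji
    · exact absurd (hωzero j i hji.symm) (ne_of_gt hij)
    have hP1 := hPareto i j hij
    have hP2 := hPareto j i hji
    cases hsi : s i <;> cases hsj : s j <;> simp <;>
      constructor <;> nlinarith [hP1.1, hP1.2, hP2.1, hP2.2]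
  set S := univ.filter (fun i : Fin N => k ≤ (i : ℕ)) with hS
  set T := univ.filter (fun i : Fin N => (i : ℕ) < k) with hT
  set f : (Fin N → Fin N → ℝ) → ℝ :=
    fun x => ∑ i ∈ S, ∑ j, (ω i j * x i j + ω j i * x j i) with hf
  have hlinf : IsLinearMap ℝ f := by
    constructor
    · intro x y
      simp only [hf]
      rw [← Finset.sum_add_distrib]
      refine Finset.sum_congr rfl fun i _ => ?_
      rw [← Finset.sum_add_distrib]
      refine Finset.sum_congr rfl fun j _ => ?_
      simp only [Pi.add_apply]; ring
    · intro c x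
      simp only [hf, smul_eq_mul, Finset.mul_sum]
      refine Finset.sum_congr rfl fun i _ => ?_
      refine Finset.sum_congr rfl fun j _ => ?_
      simp only [Pi.smul_apply, smul_eq_mul]; ring
  set Pi' := ∑ i ∈ S, π i with hPi
  have hωsum : ∑ i ∈ S, ∑ j, (ω i j + ω j i) = 2 * Pi' := by
    rw [hPi, Finset.mul_sum]
    refine Finset.sum_congr rfl fun i _ => ?_
    rw [Finset.sum_add_distrib, (hsums i).1, (hsums i).2]; ring
  have hsub : convexHull ℝ {x | ∃ s, x = U s} ⊆
      {x | 2 * Pi' * DD ≤ f x ∧ f x ≤ 2 * Pi' * CC} := by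
    apply convexHull_min
    · rintro x ⟨s, rfl⟩
      have hconst : ∀ c : ℝ, ∑ i ∈ S, ∑ j, (ω i j + ω j i) * c = 2 * Pi' * c := by
        intro c
        rw [← hωsum, Finset.sum_mul]
        exact Finset.sum_congr rfl fun i _ => (Finset.sum_mul _ _ _).symm
      constructor
      · calc 2 * Pi' * DD = ∑ i ∈ S, ∑ j, (ω i j + ω j i) * DD := (hconst DD).symm
          _ ≤ f (U s) := by
              refine Finset.sum_le_sum fun i _ => Finset.sum_le_sum fun j _ => ?_
              exact (hvert s i j).1
      · calc f (U s) ≤ ∑ i ∈ S, ∑ j, (ω i j + ω j i) * CC := by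
              refine Finset.sum_le_sum fun i _ => Finset.sum_le_sum fun j _ => ?_
              exact (hvert s i j).2
          _ = 2 * Pi' * CC := hconst CC
    · exact (convex_halfSpace_ge hlinf _).inter (convex_halfSpace_le hlinf _)
  obtain ⟨hflow, hfhigh⟩ := hsub hu
  -- total μ sum is zero
  have htot : ∑ i, μ i u = 0 := by
    simp only [hμ, Finset.sum_sub_distrib]
    rw [sub_eq_zero, Finset.sum_comm]
  have hsplit : ∑ i ∈ T, μ i u + ∑ i ∈ S, μ i u = 0 := by
    rw [← htot, hS, hT]
    rw [← Finset.sum_filter_add_sum_filter_not univ (fun i : Fin N => (i : ℕ) < k) (fun i => μ i u)]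
    congr 1
    refine Finset.sum_congr ?_ fun _ _ => rfl
    simp [not_lt]
  have hcardT : T.card ≤ k := by
    have : T.card ≤ (Finset.range k).card :=
      Finset.card_le_card_of_injOn (fun j : Fin N => (j : ℕ))
        (fun j hj => by
          rw [hT, Finset.mem_coe, Finset.mem_filter] at hj
          exact Finset.mem_coe.2 (Finset.mem_range.2 hj.2))
        (fun a _ b _ h => Fin.ext h)
    simpa using this
  have hTup : ∑ i ∈ T, μ i u ≤ 0 := by
    apply Finset.sum_nonpos
    intro i hi
    rw [hT, Finset.mem_filter] at hi
    exact (hΛ i hi.2).2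
  have hTlow : -(k * δ) ≤ ∑ i ∈ T, μ i u := by
    calc -(k * δ) ≤ -(T.card * δ) := by
          have : (T.card : ℝ) ≤ k := Nat.cast_le.2 hcardT
          nlinarith
      _ = ∑ _i ∈ T, -δ := by rw [Finset.sum_const, nsmul_eq_mul]; ring
      _ ≤ ∑ i ∈ T, μ i u := by
          refine Finset.sum_le_sum fun i hi => ?_
          rw [hT, Finset.mem_filter] at hi
          exact (hΛ i hi.2).1
  have hMlow : 0 ≤ ∑ i ∈ S, μ i u := by linarith
  have hMhigh : ∑ i ∈ S, μ i u ≤ k * δ := by linarith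
  -- algebraic link
  have hkey : 2 * (∑ i ∈ S, π i * (∑ j, K i j * u i j)) = (∑ i ∈ S, μ i u) + f u := by
    rw [hf, ← Finset.sum_add_distrib, Finset.mul_sum]
    refine Finset.sum_congr rfl fun i _ => ?_
    rw [hμ, ← Finset.sum_add_distrib, Finset.mul_sum, Finset.mul_sum]
    refine Finset.sum_congr rfl fun j _ => ?_
    rw [hω]
    ring
  refine ⟨⟨hMlow, hMhigh⟩, ?_, ?_⟩
  · nlinarith
  · nlinarith
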